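/- For every positive integer n and every rational x with 1/(n+1) < x < 1/n, the interrobang function satisfies ‽(1/(n+1)) < ‽(x) < ‽(1/n). -/

import Mathlib

/-- The defining functional equations of the interrobang function on `[0,1] ∩ ℚ`. -/
def InterrobangEq (f : ℚ → ℝ) : Prop :=
  f 0 = 0 ∧
  (∀ x : ℚ, 0 < x → x ≤ 1/2 →
    f x = (4 : ℝ) ^ (-⌊(1/x : ℚ)⌋) * (1 - 2 * f (Int.fract (1/x)))) ∧
  (∀ x : ℚ, 1/2 < x → x ≤ 1 →
    f x = 3/8 - 3/4 * f (1/x - 1) - 1/2 * f (1 - x))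

lemma den_sub_int_dvd (q : ℚ) (k : ℤ) : (q - (k:ℚ)).den ∣ q.den := by
  have h := Rat.add_den_dvd q (-(k:ℚ))
  simpa [sub_eq_add_neg] using h

lemma den_one_div (t : ℚ) (ht : t ≠ 0) : (1/t).den = t.num.natAbs := by
  have hnum : t.num ≠ 0 := Rat.num_ne_zero.mpr ht
  rw [one_div, Rat.inv_def, Rat.den_divInt, Int.gcd_comm t.num]
  have hg : (t.den : ℤ).gcd t.num = 1 := by
    have := t.reduced
    simpa [Int.gcd, Nat.coprime_comm] using this
  simp [hnum, hg]

/-- numerator natAbs bound from `0 ≤ s < 1` and a denominator bound. -/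
lemma num_natAbs_lt (s : ℚ) (hs0 : 0 ≤ s) (hs1 : s < 1) {m : ℕ} (hden : s.den ≤ m) :
    s.num.natAbs < m := by
  have h1 : s.num < s.den := by
    have hd : ((s.den:ℚ)) ≠ 0 := by exact_mod_cast s.den_ne_zero
    have h : (s.num:ℚ) = s * s.den := (div_eq_iff hd).1 (Rat.num_div_den s)
    have hd0 : (0:ℚ) < (s.den:ℚ) := by exact_mod_cast s.den_pos
    have : (s.num : ℚ) < (s.den : ℚ) := by nlinarith
    exact_mod_cast this
  have h0 : 0 ≤ s.num := Rat.num_nonneg.mpr hs0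
  omega

lemma num_natAbs_lt_of_lt (z t : ℚ) (hz0 : 0 ≤ z) (hzt : z < t) (hden : z.den ≤ t.den) :
    z.num.natAbs < t.num.natAbs := by
  have hzd : (0:ℚ) < (z.den : ℚ) := by exact_mod_cast z.den_pos
  have ht0 : 0 < t := lt_of_le_of_lt hz0 hzt
  have h1 : (z.num : ℚ) = z * z.den :=
    (div_eq_iff (by exact_mod_cast z.den_ne_zero)).1 (Rat.num_div_den z)
  have h2 : (t.num : ℚ) = t * t.den :=
    (div_eq_iff (by exact_mod_cast t.den_ne_zero)).1 (Rat.num_div_den t)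
  have hd : (z.den : ℚ) ≤ (t.den : ℚ) := by exact_mod_cast hden
  have : (z.num : ℚ) < (t.num : ℚ) := by
    calc (z.num : ℚ) = z * z.den := h1
    _ < t * z.den := by nlinarith
    _ ≤ t * t.den := by nlinarith
    _ = t.num := h2.symm
  have hlt : z.num < t.num := by exact_mod_cast this
  have h0 : 0 ≤ z.num := Rat.num_nonneg.mpr hz0
  omega

/-- Key bounds for the interrobang function. -/
lemma interrobang_key (f : ℚ → ℝ) (hf : InterrobangEq f) :
    ∀ N : ℕ, ∀ t : ℚ, t.num.natAbs ≤ N →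
      ((0 < t → t ≤ 1/2 → 0 < f t ∧ f t ≤ 1/16) ∧
       (1/2 < t → t < 1 → 1/16 < f t ∧ f t < 3/8)) := by
  intro N
  induction N with
  | zero =>
    intro t hN
    have ht : t = 0 := by
      have : t.num = 0 := by omega
      exact Rat.zero_iff_num_zero.mpr this
    subst ht
    constructor
    · intro h; norm_num at h
    · intro h; norm_num at h
  | succ N IH =>
    intro t hN
    -- general consequence of IH for any s ∈ [0,1) with small numerator
    have IH' : ∀ s : ℚ, s.num.natAbs ≤ N → 0 ≤ s → s < 1 → 0 ≤ f s ∧ f s < 3/8 := by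
      intro s hs hs0 hs1
      rcases eq_or_lt_of_le hs0 with h0 | h0
      · rw [← h0, hf.1]; norm_num
      · rcases le_or_gt s (1/2) with h | h
        · obtain ⟨ha, hb⟩ := (IH s hs).1 h0 h
          constructor <;> linarith
        · obtain ⟨ha, hb⟩ := (IH s hs).2 h hs1
          constructor <;> linarith
    constructor
    · -- branch 1 : 0 < t ≤ 1/2
      intro ht0 ht2
      have htne : t ≠ 0 := ne_of_gt ht0
      have hr2 : (2:ℚ) ≤ 1/t := by
        rw [le_div_iff₀ ht0]; linarith
      set n : ℤ := ⌊(1/t : ℚ)⌋ with hn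
      have hn2 : 2 ≤ n := Int.le_floor.mpr (by exact_mod_cast hr2)
      set s : ℚ := Int.fract (1/t) with hsdef
      have hs0 : 0 ≤ s := Int.fract_nonneg _
      have hs1 : s < 1 := Int.fract_lt_one _
      have hsnum : s.num.natAbs ≤ N := by
        have hdvd : s.den ∣ (1/t).den := by
          have : s = 1/t - ((n:ℤ):ℚ) := by rw [hsdef, Int.fract, hn]
          rw [this]; exact den_sub_int_dvd _ _
        have hden : s.den ≤ t.num.natAbs := by
          rw [← den_one_div t htne]
          exact Nat.le_of_dvd (1/t).den_pos hdvd
        have := num_natAbs_lt s hs0 hs1 hden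
        omega
      obtain ⟨hfs0, hfs1⟩ := IH' s hsnum hs0 hs1
      have heq := hf.2.1 t ht0 ht2
      rw [← hn, ← hsdef] at heq
      have hA0 : (0:ℝ) < 4 ^ (-n) := zpow_pos (by norm_num) _
      have hA : (4:ℝ) ^ (-n) ≤ 1/16 := by
        calc (4:ℝ) ^ (-n) ≤ 4 ^ (-2 : ℤ) :=
          zpow_le_zpow_right₀ (by norm_num) (by omega)
        _ = 1/16 := by norm_num
      rw [heq]
      constructor
      · nlinarith
      · nlinarith
    · -- branch 2 : 1/2 < t < 1
      intro ht2 ht1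
      have ht0 : 0 < t := by linarith
      have htne : t ≠ 0 := ne_of_gt ht0
      have heq := hf.2.2 t ht2 (le_of_lt ht1)
      set y : ℚ := 1/t - 1 with hy
      set z : ℚ := 1 - t with hz
      have hy0 : 0 < y := by
        rw [hy]; have : 1 < 1/t := by rw [lt_div_iff₀ ht0]; linarith
        linarith
      have hy1 : y < 1 := by
        rw [hy]; have : 1/t < 2 := by rw [div_lt_iff₀ ht0]; linarith
        linarith
      have hz0 : 0 < z := by rw [hz]; linarith
      have hz2 : z < 1/2 := by rw [hz]; linarith
      have hynum : y.num.natAbs ≤ N := by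
        have hdvd : y.den ∣ (1/t).den := by
          have : y = 1/t - ((1:ℤ):ℚ) := by rw [hy]; norm_num
          rw [this]; exact den_sub_int_dvd _ _
        have hden : y.den ≤ t.num.natAbs := by
          rw [← den_one_div t htne]
          exact Nat.le_of_dvd (1/t).den_pos hdvd
        have := num_natAbs_lt y (le_of_lt hy0) hy1 hden
        omega
      have hznum : z.num.natAbs ≤ N := by
        have hdvd : z.den ∣ t.den := by
          have h1 : z = -(t - ((1:ℤ):ℚ)) := by rw [hz]; push_cast; ring
          have h2 : z.den = (t - ((1:ℤ):ℚ)).den := by rw [h1, Rat.neg_den]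
          rw [h2]; exact den_sub_int_dvd _ _
        have hdenle : z.den ≤ t.den := Nat.le_of_dvd t.den_pos hdvd
        have := num_natAbs_lt_of_lt z t (le_of_lt hz0) (by linarith) hdenle
        omega
      obtain ⟨hfy0, hfy1⟩ := IH' y hynum (le_of_lt hy0) hy1
      have hfy0' : 0 < f y := by
        rcases le_or_gt y (1/2) with h | h
        · exact ((IH y hynum).1 hy0 h).1
        · have := ((IH y hynum).2 h hy1).1; linarith
      have hfz : 0 < f z ∧ f z ≤ 1/16 := (IH z hznum).1 hz0 (by linarith)
      rw [heq]
      constructor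
      · linarith [hfz.1, hfz.2]
      · linarith [hfz.1, hfz.2]

theorem interrobang_bounds (f : ℚ → ℝ) (hf : InterrobangEq f) :
    ∀ n : ℕ, 1 ≤ n → ∀ x : ℚ, 1/((n : ℚ)+1) < x → x < 1/(n : ℚ) →
      f (1/((n : ℚ)+1)) < f x ∧ f x < f (1/(n : ℚ)) := by
  intro n hn x hx1 hx2
  have hn0 : (0:ℚ) < (n:ℚ) := by exact_mod_cast hn
  have hn1 : (1:ℚ) ≤ (n:ℚ) := by exact_mod_cast hn
  have hx0 : 0 < x := lt_trans (by positivity) hx1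
  -- value at 1/(n+1)
  have hval : ∀ m : ℕ, 2 ≤ m → f (1/(m:ℚ)) = (4:ℝ) ^ (-(m:ℤ)) := by
    intro m hm
    have hm0 : (0:ℚ) < (m:ℚ) := by exact_mod_cast Nat.lt_of_lt_of_le (by norm_num) hm
    have h1 : (0:ℚ) < 1/(m:ℚ) := by positivity
    have h2 : (1:ℚ)/(m:ℚ) ≤ 1/2 := by
      apply div_le_div_of_nonneg_left (by norm_num) (by norm_num)
      exact_mod_cast hm
    have heq := hf.2.1 _ h1 h2
    rw [one_div_one_div] at heq
    have hfl : ⌊(m:ℚ)⌋ = (m:ℤ) := by exact_mod_cast Int.floor_natCast m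
    have hfr : Int.fract ((m:ℚ)) = 0 := by
      rw [Int.fract]; rw [hfl]; push_cast; ring
    rw [hfl, hfr, hf.1] at heq
    rw [heq]; ring
  have hvn1 : f (1/((n:ℚ)+1)) = (4:ℝ) ^ (-((n:ℤ)+1)) := by
    have := hval (n+1) (by omega)
    push_cast at this ⊢
    convert this using 3 <;> push_cast <;> ring
  rcases eq_or_lt_of_le hn with h1 | h2
  · -- n = 1 : x ∈ (1/2, 1)
    have hn' : n = 1 := h1.symm
    subst hn'
    have hx2' : x < 1 := by simpa using hx2
    have hx1' : 1/2 < x := by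
      have : ((1:ℕ):ℚ) = 1 := by norm_num
      calc (1:ℚ)/2 = 1/(((1:ℕ):ℚ)+1) := by norm_num
      _ < x := hx1
    have hkey := (interrobang_key f hf x.num.natAbs x le_rfl).2 hx1' hx2'
    have hv1 : f (1/((1:ℕ):ℚ)) = 3/8 := by
      have heq := hf.2.2 1 (by norm_num) (by norm_num)
      norm_num [hf.1] at heq
      simpa using heq
    have hv2 : f (1/(((1:ℕ):ℚ)+1)) = (4:ℝ)^(-(2:ℤ)) := by
      have := hval 2 le_rfl
      convert this using 3 <;> norm_num
    rw [hv1, hv2]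
    constructor
    · have : (4:ℝ)^(-(2:ℤ)) = 1/16 := by norm_num
      rw [this]; exact hkey.1
    · exact hkey.2
  · -- n ≥ 2
    have hn2 : 2 ≤ n := h2
    have hn2' : (2:ℚ) ≤ (n:ℚ) := by exact_mod_cast hn2
    have hx12 : x ≤ 1/2 := by
      have : (1:ℚ)/(n:ℚ) ≤ 1/2 :=
        div_le_div_of_nonneg_left (by norm_num) (by norm_num) hn2'
      linarith
    have heq := hf.2.1 x hx0 hx12
    -- floor of 1/x is n
    have hb1 : (n:ℚ) < 1/x := by
      rw [lt_div_iff₀ hx0]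
      calc (n:ℚ) * x < (n:ℚ) * (1/(n:ℚ)) := by
            apply mul_lt_mul_of_pos_left hx2 hn0
      _ = 1 := by field_simp
    have hb2 : 1/x < (n:ℚ)+1 := by
      rw [div_lt_iff₀ hx0]
      have : 1/((n:ℚ)+1) * ((n:ℚ)+1) < x * ((n:ℚ)+1) := by
        apply mul_lt_mul_of_pos_right hx1 (by positivity)
      calc (1:ℚ) = 1/((n:ℚ)+1) * ((n:ℚ)+1) := by field_simp
      _ < x * ((n:ℚ)+1) := this
      _ = ((n:ℚ)+1) * x := by ring
    have hfl : ⌊(1/x : ℚ)⌋ = (n:ℤ) := by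
      apply Int.floor_eq_iff.mpr
      constructor
      · exact_mod_cast le_of_lt hb1
      · push_cast; exact hb2
    rw [hfl] at heq
    set s : ℚ := Int.fract (1/x) with hs
    have hs0 : 0 < s := by
      have hdef : s = 1/x - ((n:ℤ):ℚ) := by rw [hs, Int.fract, hfl]
      have hne : s ≠ 0 := by
        intro h
        rw [hdef] at h
        have hx : (1/x : ℚ) = ((n:ℤ):ℚ) := by linarith
        rw [hx] at hb1
        push_cast at hb1
        exact lt_irrefl _ hb1
      exact lt_of_le_of_ne (Int.fract_nonneg _) (Ne.symm hne)
    have hs1 : s < 1 := Int.fract_lt_one _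
    have hkey := interrobang_key f hf s.num.natAbs s le_rfl
    have hfs : 0 < f s ∧ f s < 3/8 := by
      rcases le_or_gt s (1/2) with h | h
      · obtain ⟨ha, hb⟩ := hkey.1 hs0 h
        constructor <;> linarith
      · obtain ⟨ha, hb⟩ := hkey.2 h hs1
        constructor <;> linarith
    have hvn : f (1/(n:ℚ)) = (4:ℝ) ^ (-(n:ℤ)) := hval n hn2
    have hA0 : (0:ℝ) < (4:ℝ) ^ (-(n:ℤ)) := zpow_pos (by norm_num) _
    have hsplit : (4:ℝ) ^ (-((n:ℤ)+1)) = (4:ℝ) ^ (-(n:ℤ)) * (4:ℝ)⁻¹ := by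
      rw [← zpow_neg_one, ← zpow_add₀ (by norm_num : (4:ℝ) ≠ 0)]
      ring_nf
    rw [heq, hvn1, hvn, hsplit]
    constructor
    · nlinarith [hfs.1, hfs.2]
    · nlinarith [hfs.1, hfs.2]
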